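/- arXiv:1103.5766 — 2 statements merged into one kernel-verified Lean document; each statement's English description precedes it below -/
import Mathlib

section
/- Let η : X_rat → ℕ be a finitely supported function whose support Supp η belongs to X_*. Then (g ⊗ I_η)^Γ = (g ⊗ Ĩ_η)^Γ, where Ĩ_η = ∏_{x ∈ Supp η} ∏_{γ ∈ Γ} m_{γ·x}^{η(x)}. -/
set_option linter.unusedSectionVars false
set_option linter.unusedVariables false
set_option maxHeartbeats 1000000

open scoped TensorProduct

noncomputable section

/-- The action of a group element on the maximal spectrum of `A`
(so that `m_{γ·x} = comap (γ⁻¹ • ·) m_x`). -/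
def gammaDot (A Γ : Type*) [CommRing A] [Group Γ] [MulSemiringAction Γ A]
    (γ : Γ) (x : MaximalSpectrum A) : MaximalSpectrum A :=
  ⟨Ideal.comap (MulSemiringAction.toRingHom Γ A γ⁻¹) x.asIdeal, by
    have := x.isMaximal
    exact Ideal.comap_isMaximal_of_surjective _ (MulAction.surjective γ⁻¹)⟩

/-- A finite set of points of `X` containing no two (distinct) points in the same
`Γ`-orbit, i.e. an element of `X_*`. -/
def NoTwoInOrbit (A Γ : Type*) [CommRing A] [Group Γ] [MulSemiringAction Γ A]
    (s : Finset (MaximalSpectrum A)) : Prop :=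
  ∀ x ∈ s, ∀ y ∈ s, ∀ γ : Γ, gammaDot A Γ γ x = y → x = y

/-- The ideal `I_η = ∏_{x ∈ Supp η} m_x ^ η x` of `A`. -/
def idealOf {A : Type*} [CommRing A] (η : MaximalSpectrum A →₀ ℕ) : Ideal A :=
  η.support.prod fun x => x.asIdeal ^ η x

variable (k A g Γ : Type*)
variable [Field k] [IsAlgClosed k] [CharZero k]
variable [CommRing A] [Algebra k A] [Algebra.FiniteType k A]
variable [LieRing g] [LieAlgebra k g] [Module.Finite k g] [LieAlgebra.IsSemisimple k g]
variable [CommGroup Γ] [Fintype Γ]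
variable [MulSemiringAction Γ A] [SMulCommClass Γ k A]
variable [DistribMulAction Γ g] [SMulCommClass Γ k g]

/-- The `k`-submodule `g ⊗ I` of `A ⊗[k] g` determined by an ideal `I ⊆ A`. -/
def gT (I : Ideal A) : Submodule k (A ⊗[k] g) :=
  Submodule.span k {z | ∃ f ∈ I, ∃ v : g, z = f ⊗ₜ[k] v}

/-- The diagonal action of `γ ∈ Γ` on `A ⊗[k] g` as a `k`-linear map. -/
def diagMap (γ : Γ) : (A ⊗[k] g) →ₗ[k] A ⊗[k] g :=
  TensorProduct.map (DistribMulAction.toLinearMap k A γ) (DistribMulAction.toLinearMap k g γ)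

/-- The set of `Γ`-fixed points of `A ⊗[k] g`, i.e. the equivariant map algebra
`(g ⊗ A)^Γ`, as a `k`-submodule. -/
def fixedSub : Submodule k (A ⊗[k] g) :=
  ⨅ γ : Γ, LinearMap.ker (diagMap k A g Γ γ - LinearMap.id)

lemma mem_fixedSub {z : A ⊗[k] g} :
    z ∈ fixedSub k A g Γ ↔ ∀ γ : Γ, diagMap k A g Γ γ z = z := by
  simp [fixedSub, sub_eq_zero, LinearMap.sub_apply]

/-! ### auxiliary lemmas -/

section Aux

lemma aux_gammaDot_one (x : MaximalSpectrum A) : gammaDot A Γ 1 x = x := by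
  apply MaximalSpectrum.ext
  ext a
  simp [gammaDot, Ideal.mem_comap, MulSemiringAction.toRingHom]

lemma aux_gammaDot_mul (γ δ : Γ) (x : MaximalSpectrum A) :
    gammaDot A Γ γ (gammaDot A Γ δ x) = gammaDot A Γ (γ * δ) x := by
  apply MaximalSpectrum.ext
  ext a
  simp [gammaDot, Ideal.mem_comap, MulSemiringAction.toRingHom, mul_smul]
  exact Iff.rfl

lemma aux_comap_eq_map (γ : Γ) (I : Ideal A) :
    Ideal.comap (MulSemiringAction.toRingHom Γ A γ⁻¹) I =
      Ideal.map (MulSemiringAction.toRingHom Γ A γ) I := by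
  apply le_antisymm
  · intro a ha
    rw [Ideal.mem_comap] at ha
    have : a = MulSemiringAction.toRingHom Γ A γ (γ⁻¹ • a) := by
      show a = γ • γ⁻¹ • a
      rw [smul_smul, mul_inv_cancel, one_smul]
    rw [this]
    exact Ideal.mem_map_of_mem _ ha
  · rw [Ideal.map_le_iff_le_comap, Ideal.comap_comap]
    intro a ha
    rw [Ideal.mem_comap]
    show γ⁻¹ • γ • a ∈ I
    rwa [smul_smul, inv_mul_cancel, one_smul]

lemma aux_map_idealOf (γ : Γ) (η : MaximalSpectrum A →₀ ℕ) :
    Ideal.map (MulSemiringAction.toRingHom Γ A γ) (idealOf η) =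
      η.support.prod fun x => (gammaDot A Γ γ x).asIdeal ^ η x := by
  rw [idealOf]
  show Ideal.mapHom (MulSemiringAction.toRingHom Γ A γ) _ = _
  rw [map_prod]
  refine Finset.prod_congr rfl fun x _ => ?_
  show Ideal.map _ _ = _
  rw [Ideal.map_pow]
  congr 1
  rw [← aux_comap_eq_map]
  rfl

lemma aux_prod_mono {ι : Type*} (s : Finset ι) (f h : ι → Ideal A)
    (hle : ∀ x ∈ s, f x ≤ h x) : s.prod f ≤ s.prod h := by
  classical
  induction s using Finset.induction with
  | empty => simp
  | insert a s' hx ih =>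
    rw [Finset.prod_insert hx, Finset.prod_insert hx]
    exact Ideal.mul_mono (hle a (Finset.mem_insert_self a s'))
      (ih fun x hxs => hle x (Finset.mem_insert_of_mem hxs))

lemma aux_inf_le_prod {ι : Type*} (s : Finset ι) (J : ι → Ideal A)
    (hco : ∀ a ∈ s, ∀ b ∈ s, a ≠ b → J a ⊔ J b = ⊤) :
    (⨅ i ∈ s, J i) ≤ s.prod J := by
  classical
  induction s using Finset.induction with
  | empty => simp
  | insert a s' hx ih =>
    rw [Finset.prod_insert hx,
      Ideal.mul_eq_inf_of_coprime (Ideal.sup_prod_eq_top fun i hi =>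
        hco a (Finset.mem_insert_self a s') i (Finset.mem_insert_of_mem hi)
          (fun h => hx (h ▸ hi)))]
    have h1 : (⨅ i ∈ insert a s', J i) ≤ J a := by
      exact iInf_le_of_le a (iInf_le_of_le (Finset.mem_insert_self a s') le_rfl)
    have h2 : (⨅ i ∈ insert a s', J i) ≤ ⨅ i ∈ s', J i := by
      refine le_iInf fun i => le_iInf fun hi => ?_
      exact iInf_le_of_le i (iInf_le_of_le (Finset.mem_insert_of_mem hi) le_rfl)
    exact le_inf h1 (h2.trans (ih fun x hx' y hy' =>
      hco x (Finset.mem_insert_of_mem hx') y (Finset.mem_insert_of_mem hy')))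

end Aux

/-! ### the component characterization of `gT` -/

section Components

abbrev gIdx := Module.Free.ChooseBasisIndex k g

def gBasis : Module.Basis (gIdx k g) k g := Module.Free.chooseBasis k g

def compEquiv : (A ⊗[k] g) ≃ₗ[k] (gIdx k g →₀ A) :=
  (LinearEquiv.lTensor A (gBasis k g).repr) ≪≫ₗ
    TensorProduct.finsuppScalarRight k k A (gIdx k g)

lemma compEquiv_tmul (f : A) (v : g) (i : gIdx k g) :
    compEquiv k A g (f ⊗ₜ[k] v) i = ((gBasis k g).repr v) i • f := by
  simp [compEquiv]

lemma compEquiv_symm_single (a : A) (i : gIdx k g) :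
    (compEquiv k A g).symm (Finsupp.single i a) = a ⊗ₜ[k] (gBasis k g) i := by
  rw [LinearEquiv.symm_apply_eq]
  ext j
  rw [compEquiv_tmul]
  by_cases h : i = j
  · subst h; simp
  · simp [Module.Basis.repr_self, Finsupp.single_apply, h]

lemma mem_gT_iff (I : Ideal A) (z : A ⊗[k] g) :
    z ∈ gT k A g I ↔ ∀ i, compEquiv k A g z i ∈ I := by
  constructor
  · intro hz
    have : gT k A g I ≤ Submodule.comap (compEquiv k A g).toLinearMap
        (Submodule.comap (Finsupp.lcoeFun (M := A))
          (Submodule.pi Set.univ fun _ : gIdx k g => I.restrictScalars k)) := by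
      rw [gT, Submodule.span_le]
      rintro _ ⟨f, hf, v, rfl⟩
      intro i _
      simp only [Finsupp.lcoeFun, LinearEquiv.coe_toLinearMap, LinearMap.coe_mk,
        AddHom.coe_mk]
      rw [compEquiv_tmul]
      exact Submodule.smul_mem (I.restrictScalars k) _ hf
    intro i
    exact this hz i (Set.mem_univ i)
  · intro h
    have hz : z = (compEquiv k A g).symm (compEquiv k A g z) := by simp
    rw [hz, ← Finsupp.sum_single (compEquiv k A g z), map_finsuppSum]
    refine Submodule.sum_mem _ fun i hi => ?_
    dsimp only
    rw [compEquiv_symm_single k A g (compEquiv k A g z i) i]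
    exact Submodule.subset_span ⟨_, h i, _, rfl⟩

lemma diagMap_gT (γ : Γ) (I : Ideal A) {z : A ⊗[k] g} (hz : z ∈ gT k A g I) :
    diagMap k A g Γ γ z ∈ gT k A g (Ideal.map (MulSemiringAction.toRingHom Γ A γ) I) := by
  have : gT k A g I ≤ Submodule.comap (diagMap k A g Γ γ)
      (gT k A g (Ideal.map (MulSemiringAction.toRingHom Γ A γ) I)) := by
    rw [gT, Submodule.span_le]
    rintro _ ⟨f, hf, v, rfl⟩
    simp only [Set.mem_setOf_eq, Submodule.mem_comap, diagMap, TensorProduct.map_tmul]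
    exact Submodule.subset_span ⟨_, Ideal.mem_map_of_mem _ hf, _, rfl⟩
  exact this hz

end Components

/-- Lemma 2.1 of the paper.  If `η : X_rat → ℕ` is finitely supported with
`Supp η ∈ X_*`, then `(g ⊗ I_η)^Γ = (g ⊗ Ĩ_η)^Γ` where
`Ĩ_η = ∏_{x ∈ Supp η} ∏_{γ ∈ Γ} m_{γ·x}^{η x}`. -/
theorem statement0
    (hbr : ∀ (γ : Γ) (x y : g), γ • ⁅x, y⁆ = ⁅γ • x, γ • y⁆)
    (hfree : ∀ γ : Γ, γ ≠ 1 → ∀ x : MaximalSpectrum A, gammaDot A Γ γ x ≠ x)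
    (η : MaximalSpectrum A →₀ ℕ)
    (hη : NoTwoInOrbit A Γ η.support) :
    gT k A g (idealOf η) ⊓ fixedSub k A g Γ =
      gT k A g (η.support.prod fun x => ∏ γ : Γ, (gammaDot A Γ γ x).asIdeal ^ η x) ⊓
        fixedSub k A g Γ := by
  classical
  set J : Γ → Ideal A := fun γ => Ideal.map (MulSemiringAction.toRingHom Γ A γ) (idealOf η)
    with hJ
  -- pairwise coprimality
  have hcop : ∀ γ ∈ (Finset.univ : Finset Γ), ∀ δ ∈ (Finset.univ : Finset Γ),
      γ ≠ δ → J γ ⊔ J δ = ⊤ := by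
    intro γ _ δ _ hne
    by_contra htop
    obtain ⟨P, hPmax, hP⟩ := Ideal.exists_le_maximal _ htop
    have hγ : J γ ≤ P := le_trans le_sup_left hP
    have hδ : J δ ≤ P := le_trans le_sup_right hP
    have hJeq : ∀ τ : Γ, J τ = η.support.prod fun x => (gammaDot A Γ τ x).asIdeal ^ η x :=
      fun τ => aux_map_idealOf A Γ τ η
    rw [hJeq γ] at hγ
    rw [hJeq δ] at hδ
    obtain ⟨x, hx, hxP⟩ := (Ideal.IsPrime.prod_le hPmax.isPrime).mp hγ
    obtain ⟨y, hy, hyP⟩ := (Ideal.IsPrime.prod_le hPmax.isPrime).mp hδ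
    have hxne : η x ≠ 0 := Finsupp.mem_support_iff.mp hx
    have hyne : η y ≠ 0 := Finsupp.mem_support_iff.mp hy
    have hx1 : (gammaDot A Γ γ x).asIdeal ≤ P :=
      (Ideal.IsPrime.pow_le_iff hxne).mp hxP
    have hy1 : (gammaDot A Γ δ y).asIdeal ≤ P :=
      (Ideal.IsPrime.pow_le_iff hyne).mp hyP
    have hx2 : (gammaDot A Γ γ x).asIdeal = P :=
      (gammaDot A Γ γ x).isMaximal.eq_of_le hPmax.ne_top hx1
    have hy2 : (gammaDot A Γ δ y).asIdeal = P :=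
      (gammaDot A Γ δ y).isMaximal.eq_of_le hPmax.ne_top hy1
    have heq : gammaDot A Γ γ x = gammaDot A Γ δ y :=
      MaximalSpectrum.ext (hx2.trans hy2.symm)
    have heq2 : gammaDot A Γ (δ⁻¹ * γ) x = y := by
      have := congrArg (gammaDot A Γ δ⁻¹) heq
      rwa [aux_gammaDot_mul, aux_gammaDot_mul, inv_mul_cancel, aux_gammaDot_one] at this
    have hxy : x = y := hη x hx y hy (δ⁻¹ * γ) heq2
    subst hxy
    have h1 : δ⁻¹ * γ = 1 := by
      by_contra hne1
      exact hfree _ hne1 x heq2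
    exact hne (inv_mul_eq_one.mp h1).symm
  -- the target ideal equals ∏ γ, J γ
  have hprod : (η.support.prod fun x => ∏ γ : Γ, (gammaDot A Γ γ x).asIdeal ^ η x) =
      ∏ γ : Γ, J γ := by
    rw [Finset.prod_comm]
    exact Finset.prod_congr rfl fun γ _ => (aux_map_idealOf A Γ γ η).symm
  -- the target ideal is contained in idealOf η
  have hle : (η.support.prod fun x => ∏ γ : Γ, (gammaDot A Γ γ x).asIdeal ^ η x) ≤
      idealOf η := by
    rw [idealOf]
    refine aux_prod_mono A _ _ _ fun x _ => ?_
    calc (∏ γ : Γ, (gammaDot A Γ γ x).asIdeal ^ η x)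
        ≤ (gammaDot A Γ 1 x).asIdeal ^ η x :=
          Ideal.prod_le_inf.trans (Finset.inf_le (Finset.mem_univ 1))
      _ = x.asIdeal ^ η x := by rw [aux_gammaDot_one]
  apply le_antisymm
  · intro z hz'
    rw [Submodule.mem_inf] at hz' ⊢
    obtain ⟨hz, hfix⟩ := hz'
    refine ⟨?_, hfix⟩
    rw [mem_gT_iff]
    intro i
    rw [hprod]
    have hmem : ∀ γ : Γ, compEquiv k A g z i ∈ J γ := by
      intro γ
      have : diagMap k A g Γ γ z ∈ gT k A g (J γ) := diagMap_gT k A g Γ γ _ hz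
      rw [(mem_fixedSub k A g Γ).mp hfix γ] at this
      exact (mem_gT_iff k A g _ z).mp this i
    have : compEquiv k A g z i ∈ ⨅ γ ∈ (Finset.univ : Finset Γ), J γ := by
      simp only [Ideal.mem_iInf]
      intro γ _
      exact hmem γ
    exact aux_inf_le_prod A Finset.univ J hcop this
  · intro z hz'
    rw [Submodule.mem_inf] at hz' ⊢
    obtain ⟨hz, hfix⟩ := hz'
    refine ⟨?_, hfix⟩
    rw [mem_gT_iff] at hz ⊢
    exact fun i => hle (hz i)

end
end

section
/- Let η : X_rat → ℕ be a finitely supported function whose support is contained in some element of X_*. Then the restriction ev_η^Γ of the generalized evaluation map ev_η : g ⊗ A → (g ⊗ A)/(g ⊗ I_η) to (g ⊗ A)^Γ is surjective, and hence induces a Lie algebra isomorphism (g ⊗ A)^Γ/(g ⊗ I_η)^Γ ≅ (g ⊗ A)/(g ⊗ I_η). -/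
set_option linter.unusedSectionVars false

open scoped TensorProduct

noncomputable section

variable (k A g Γ : Type*)
variable [Field k] [IsAlgClosed k] [CharZero k]
variable [CommRing A] [Algebra k A] [Algebra.FiniteType k A]
variable [LieRing g] [LieAlgebra k g] [Module.Finite k g] [LieAlgebra.IsSemisimple k g]
variable [CommGroup Γ] [Fintype Γ]
variable [MulSemiringAction Γ A] [SMulCommClass Γ k A]
variable [DistribMulAction Γ g] [SMulCommClass Γ k g]

/-- `A ⊗[k] g` is a Lie algebra over `k` (by restriction of scalars from `A`). -/
instance : LieAlgebra k (A ⊗[k] g) where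
  lie_smul t x y := by
    rw [← algebraMap_smul A t y, lie_smul, algebraMap_smul]

lemma diagMap_lie (hbr : ∀ (γ : Γ) (x y : g), γ • ⁅x, y⁆ = ⁅γ • x, γ • y⁆) (γ : Γ)
    (z w : A ⊗[k] g) :
    diagMap k A g Γ γ ⁅z, w⁆ = ⁅diagMap k A g Γ γ z, diagMap k A g Γ γ w⁆ := by
  induction z using TensorProduct.induction_on with
  | zero => simp
  | tmul a v =>
    induction w using TensorProduct.induction_on with
    | zero => simp
    | tmul b u =>
      rw [LieAlgebra.ExtendScalars.bracket_tmul]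
      simp only [diagMap, TensorProduct.map_tmul, DistribMulAction.toLinearMap,
        DistribSMul.toLinearMap_apply]
      rw [LieAlgebra.ExtendScalars.bracket_tmul, smul_mul', hbr]
    | add w1 w2 h1 h2 => rw [lie_add, map_add, h1, h2, map_add, lie_add]
  | add z1 z2 h1 h2 => rw [add_lie, map_add, h1, h2, map_add, add_lie]

/-- The equivariant map algebra `(g ⊗ A)^Γ` as a Lie subalgebra of `A ⊗[k] g`. -/
def fixedLie (hbr : ∀ (γ : Γ) (x y : g), γ • ⁅x, y⁆ = ⁅γ • x, γ • y⁆) :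
    LieSubalgebra k (A ⊗[k] g) :=
  { fixedSub k A g Γ with
    lie_mem' := by
      intro x y hx hy
      have hx' : x ∈ fixedSub k A g Γ := hx
      have hy' : y ∈ fixedSub k A g Γ := hy
      show ⁅x, y⁆ ∈ fixedSub k A g Γ
      rw [mem_fixedSub] at hx' hy' ⊢
      intro γ
      rw [diagMap_lie k A g Γ hbr, hx' γ, hy' γ] }

/-- `g ⊗ I` as a Lie ideal of `A ⊗[k] g`. -/
def gTLie (I : Ideal A) : LieIdeal k (A ⊗[k] g) :=
  { gT k A g I with
    lie_mem := by
      intro x m hm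
      have hm' : m ∈ gT k A g I := hm
      show ⁅x, m⁆ ∈ gT k A g I
      clear hm
      induction hm' using Submodule.span_induction with
      | mem z hz =>
        obtain ⟨f, hf, v, rfl⟩ := hz
        induction x using TensorProduct.induction_on with
        | zero => rw [zero_lie]; exact (gT k A g I).zero_mem
        | tmul a w =>
          rw [LieAlgebra.ExtendScalars.bracket_tmul]
          exact Submodule.subset_span ⟨a * f, I.mul_mem_left a hf, ⁅w, v⁆, rfl⟩
        | add x1 x2 h1 h2 => rw [add_lie]; exact (gT k A g I).add_mem h1 h2
      | zero => rw [lie_zero]; exact (gT k A g I).zero_mem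
      | add z w _ _ h1 h2 => rw [lie_add]; exact (gT k A g I).add_mem h1 h2
      | smul c z _ h => rw [lie_smul]; exact (gT k A g I).smul_mem c h }

variable {k A g Γ} in
/-- `(g ⊗ I)^Γ` as a Lie ideal of the equivariant map algebra `(g ⊗ A)^Γ`. -/
def fixedIdealOf (hbr : ∀ (γ : Γ) (x y : g), γ • ⁅x, y⁆ = ⁅γ • x, γ • y⁆) (I : Ideal A) :
    LieIdeal k ↥(fixedLie k A g Γ hbr) where
  carrier := {y | (y : A ⊗[k] g) ∈ gT k A g I}
  add_mem' := fun ha hb => (gT k A g I).add_mem ha hb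
  zero_mem' := (gT k A g I).zero_mem
  smul_mem' := fun c y hy => by
    simpa using (gT k A g I).smul_mem c hy
  lie_mem := fun {x m} hm => (gTLie k A g I).lie_mem hm
-- CRT lemma
lemma crt_elem (A Γ : Type*) [CommRing A] [CommGroup Γ] [Fintype Γ] [MulSemiringAction Γ A]
    (hfree : ∀ γ : Γ, γ ≠ 1 → ∀ x : MaximalSpectrum A, gammaDot A Γ γ x ≠ x)
    (η : MaximalSpectrum A →₀ ℕ) (hη : NoTwoInOrbit A Γ η.support) :
    ∃ e : A, e - 1 ∈ idealOf η ∧ ∀ γ : Γ, γ ≠ 1 → γ • e ∈ idealOf η := by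
  classical
  have hE : ∀ (γ : Γ) (I : Ideal A), Ideal.comap (MulSemiringAction.toRingHom Γ A γ) I =
      Ideal.map (MulSemiringAction.toRingHom Γ A γ⁻¹) I := by
    intro γ I
    ext a
    rw [Ideal.mem_comap, Ideal.mem_map_iff_of_surjective _ (MulAction.surjective γ⁻¹)]
    constructor
    · intro h
      exact ⟨γ • a, h, by show γ⁻¹ • γ • a = a; simp⟩
    · rintro ⟨x, hx, rfl⟩
      show γ • γ⁻¹ • x ∈ I
      simpa using hx
  have hcomap : ∀ γ : Γ, Ideal.comap (MulSemiringAction.toRingHom Γ A γ) (idealOf η) =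
      η.support.prod (fun x => (gammaDot A Γ γ⁻¹ x).asIdeal ^ η x) := by
    intro γ
    rw [hE, idealOf,
      show Ideal.map (MulSemiringAction.toRingHom Γ A γ⁻¹) (∏ x ∈ η.support, x.asIdeal ^ η x)
        = (Ideal.mapHom (MulSemiringAction.toRingHom Γ A γ⁻¹)) (∏ x ∈ η.support, x.asIdeal ^ η x)
        from rfl,
      map_prod (Ideal.mapHom (MulSemiringAction.toRingHom Γ A γ⁻¹))]
    refine Finset.prod_congr rfl (fun x hx => ?_)
    show Ideal.map _ (x.asIdeal ^ η x) = _
    rw [Ideal.map_pow]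
    congr 1
    rw [← hE]
    show Ideal.comap (MulSemiringAction.toRingHom Γ A γ) x.asIdeal = _
    simp only [gammaDot, inv_inv]
  have hkey : ∀ γ : Γ, γ ≠ 1 →
      IsCoprime (idealOf η) (Ideal.comap (MulSemiringAction.toRingHom Γ A γ) (idealOf η)) := by
    intro γ hγ
    rw [hcomap γ, idealOf]
    refine IsCoprime.prod_left (fun x hx => IsCoprime.prod_right (fun y hy => ?_))
    refine IsCoprime.pow ?_
    rw [Ideal.isCoprime_iff_sup_eq]
    refine Ideal.IsMaximal.coprime_of_ne x.isMaximal (gammaDot A Γ γ⁻¹ y).isMaximal ?_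
    intro hEq
    have hxy : gammaDot A Γ γ⁻¹ y = x := MaximalSpectrum.ext hEq.symm
    have : y = x := hη y hy x hx γ⁻¹ hxy
    exact hfree γ⁻¹ (by simpa using hγ) y (by rw [hxy, this])
  set s : Finset Γ := Finset.univ.filter (· ≠ 1) with hs
  have hcop : IsCoprime (idealOf η)
      (s.prod fun γ => Ideal.comap (MulSemiringAction.toRingHom Γ A γ) (idealOf η)) := by
    refine IsCoprime.prod_right (fun γ hγ => hkey γ ?_)
    simpa [hs] using hγ
  have hsup := Ideal.isCoprime_iff_sup_eq.mp hcop
  have h1 : (1 : A) ∈ idealOf η ⊔ _ := hsup ▸ Submodule.mem_top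
  obtain ⟨i, hi, kk, hkk, hik⟩ := Submodule.mem_sup.mp h1
  refine ⟨kk, ?_, ?_⟩
  · have : kk - 1 = -i := by rw [← hik]; ring
    rw [this]; exact (idealOf η).neg_mem hi
  · intro γ hγ
    have hle : (s.prod fun γ => Ideal.comap (MulSemiringAction.toRingHom Γ A γ) (idealOf η)) ≤
        Ideal.comap (MulSemiringAction.toRingHom Γ A γ) (idealOf η) :=
      Ideal.prod_le_inf.trans (Finset.inf_le (by simp [hs, hγ]))
    exact Ideal.mem_comap.mp (hle hkk)

variable {k A g Γ} in
lemma diagMap_comp (γ δ : Γ) (z : A ⊗[k] g) :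
    diagMap k A g Γ γ (diagMap k A g Γ δ z) = diagMap k A g Γ (γ * δ) z := by
  induction z using TensorProduct.induction_on with
  | zero => simp
  | tmul a v => simp [diagMap, mul_smul, DistribMulAction.toLinearMap, DistribSMul.toLinearMap_apply]
  | add z w h1 h2 => rw [map_add, map_add, map_add, h1, h2]

variable {k A g Γ} in
lemma diagMap_one (z : A ⊗[k] g) : diagMap k A g Γ 1 z = z := by
  induction z using TensorProduct.induction_on with
  | zero => simp
  | tmul a v => simp [diagMap, DistribMulAction.toLinearMap, DistribSMul.toLinearMap_apply]
  | add z w h1 h2 => rw [map_add, h1, h2]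

variable {k A g Γ} in
lemma diagMap_rTensor_mem_gT {I : Ideal A} (γ : Γ) {a : A} (ha : γ • a ∈ I) (z : A ⊗[k] g) :
    diagMap k A g Γ γ (LinearMap.rTensor g (LinearMap.mulLeft k a) z) ∈ gT k A g I := by
  induction z using TensorProduct.induction_on with
  | zero => simp only [map_zero]; exact (gT k A g I).zero_mem
  | tmul b v =>
    refine Submodule.subset_span ⟨(γ • a) * (γ • b), I.mul_mem_right _ ha, γ • v, ?_⟩
    simp [diagMap, smul_mul', DistribMulAction.toLinearMap, DistribSMul.toLinearMap_apply]
  | add z w h1 h2 =>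
    rw [map_add, map_add]; exact (gT k A g I).add_mem h1 h2

variable {k A g Γ} in
lemma rTensor_mulLeft_sub_mem_gT {I : Ideal A} {a : A} (ha : a - 1 ∈ I) (z : A ⊗[k] g) :
    LinearMap.rTensor g (LinearMap.mulLeft k a) z - z ∈ gT k A g I := by
  induction z using TensorProduct.induction_on with
  | zero => simp only [map_zero, sub_zero]; exact (gT k A g I).zero_mem
  | tmul b v =>
    refine Submodule.subset_span ⟨(a - 1) * b, I.mul_mem_right _ ha, v, ?_⟩
    rw [LinearMap.rTensor_tmul]
    rw [← TensorProduct.sub_tmul]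
    congr 1
    show a * b - b = (a - 1) * b
    ring
  | add z w h1 h2 =>
    rw [map_add]
    have : LinearMap.rTensor g (LinearMap.mulLeft k a) z +
        LinearMap.rTensor g (LinearMap.mulLeft k a) w - (z + w) =
        (LinearMap.rTensor g (LinearMap.mulLeft k a) z - z) +
        (LinearMap.rTensor g (LinearMap.mulLeft k a) w - w) := by abel
    rw [this]; exact (gT k A g I).add_mem h1 h2

/-- Proposition 2.2 of the paper.  If `η : X_rat → ℕ` is finitely supported
with support contained in an element of `X_*`, then the restriction of the generalized
evaluation map `ev_η : g ⊗ A → (g ⊗ A)/(g ⊗ I_η)` to `(g ⊗ A)^Γ` is surjective and induces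
a Lie algebra isomorphism `(g ⊗ A)^Γ/(g ⊗ I_η)^Γ ≅ (g ⊗ A)/(g ⊗ I_η)`. -/
theorem statement1
    (hbr : ∀ (γ : Γ) (x y : g), γ • ⁅x, y⁆ = ⁅γ • x, γ • y⁆)
    (hfree : ∀ γ : Γ, γ ≠ 1 → ∀ x : MaximalSpectrum A, gammaDot A Γ γ x ≠ x)
    (η : MaximalSpectrum A →₀ ℕ)
    (hη : NoTwoInOrbit A Γ η.support) :
    Function.Surjective (fun y : ↥(fixedLie k A g Γ hbr) =>
      LieSubmodule.Quotient.mk' (gTLie k A g (idealOf η)) (y : A ⊗[k] g)) ∧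
    ∃ e : (↥(fixedLie k A g Γ hbr) ⧸ fixedIdealOf hbr (idealOf η)) ≃ₗ⁅k⁆
        ((A ⊗[k] g) ⧸ gTLie k A g (idealOf η)),
      ∀ y : ↥(fixedLie k A g Γ hbr),
        e (LieSubmodule.Quotient.mk' (fixedIdealOf hbr (idealOf η)) y) =
          LieSubmodule.Quotient.mk' (gTLie k A g (idealOf η)) (y : A ⊗[k] g) := by
  obtain ⟨e, he1, he2⟩ := crt_elem A Γ hfree η hη
  have hsurj : Function.Surjective (fun y : ↥(fixedLie k A g Γ hbr) =>
      LieSubmodule.Quotient.mk' (gTLie k A g (idealOf η)) (y : A ⊗[k] g)) := by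
    intro q
    obtain ⟨z, rfl⟩ := LieSubmodule.Quotient.surjective_mk' (gTLie k A g (idealOf η)) q
    set u : A ⊗[k] g := LinearMap.rTensor g (LinearMap.mulLeft k e) z with hu
    set w : A ⊗[k] g := ∑ γ : Γ, diagMap k A g Γ γ u with hw
    have hwfix : w ∈ fixedLie k A g Γ hbr := by
      show w ∈ fixedSub k A g Γ
      rw [mem_fixedSub]
      intro δ
      rw [hw, map_sum]
      have h1 : ∀ γ : Γ, diagMap k A g Γ δ (diagMap k A g Γ γ u) = diagMap k A g Γ (δ * γ) u :=
        fun γ => diagMap_comp δ γ u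
      calc ∑ γ : Γ, diagMap k A g Γ δ (diagMap k A g Γ γ u)
          = ∑ γ : Γ, diagMap k A g Γ (δ * γ) u := by
            exact Finset.sum_congr rfl (fun γ _ => h1 γ)
        _ = ∑ γ : Γ, diagMap k A g Γ γ u :=
            Fintype.sum_bijective (fun γ => δ * γ) (Group.mulLeft_bijective δ)
              _ _ (fun γ => rfl)
    have hdiff : w - z ∈ gT k A g (idealOf η) := by
      classical
      have hsplit : w = u + ∑ γ ∈ Finset.univ.erase (1 : Γ), diagMap k A g Γ γ u := by
        rw [hw, ← Finset.add_sum_erase _ _ (Finset.mem_univ (1 : Γ)), diagMap_one]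
      have h2 : w - z = (u - z) + ∑ γ ∈ Finset.univ.erase (1 : Γ), diagMap k A g Γ γ u := by
        rw [hsplit]; abel
      rw [h2]
      refine (gT k A g (idealOf η)).add_mem (rTensor_mulLeft_sub_mem_gT he1 z) ?_
      refine Submodule.sum_mem _ (fun γ hγ => ?_)
      exact diagMap_rTensor_mem_gT γ (he2 γ (Finset.ne_of_mem_erase hγ)) z
    refine ⟨⟨w, hwfix⟩, ?_⟩
    show LieSubmodule.Quotient.mk' (gTLie k A g (idealOf η)) w
      = LieSubmodule.Quotient.mk' (gTLie k A g (idealOf η)) z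
    exact (Submodule.Quotient.eq _).mpr hdiff
  refine ⟨hsurj, ?_⟩
  -- Build the linear map from the fixed subalgebra to the quotient
  let Q := (A ⊗[k] g) ⧸ gTLie k A g (idealOf η)
  let ψ : ↥(fixedLie k A g Γ hbr) →ₗ[k] Q :=
    { toFun := fun y => LieSubmodule.Quotient.mk' (gTLie k A g (idealOf η)) (y : A ⊗[k] g)
      map_add' := fun a b => by simp
      map_smul' := fun c a => by
        show Submodule.Quotient.mk (c • (a : A ⊗[k] g)) = c • Submodule.Quotient.mk (a : A ⊗[k] g)
        exact Submodule.Quotient.mk_smul _ c _ }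
  have hker : LinearMap.ker ψ = (fixedIdealOf hbr (idealOf η)).toSubmodule := by
    ext y
    show ψ y = 0 ↔ _
    rw [show ψ y = LieSubmodule.Quotient.mk' (gTLie k A g (idealOf η)) (y : A ⊗[k] g) from rfl,
      LieSubmodule.Quotient.mk_eq_zero]
    rfl
  let φ : (↥(fixedLie k A g Γ hbr) ⧸ fixedIdealOf hbr (idealOf η)) →ₗ[k] Q :=
    Submodule.liftQ (fixedIdealOf hbr (idealOf η)).toSubmodule ψ (le_of_eq hker.symm)
  have hφmk : ∀ y : ↥(fixedLie k A g Γ hbr),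
      φ (LieSubmodule.Quotient.mk' (fixedIdealOf hbr (idealOf η)) y) =
        LieSubmodule.Quotient.mk' (gTLie k A g (idealOf η)) (y : A ⊗[k] g) := fun y => rfl
  let Φ : (↥(fixedLie k A g Γ hbr) ⧸ fixedIdealOf hbr (idealOf η)) →ₗ⁅k⁆ Q :=
    { φ with
      map_lie' := by
        rintro ⟨x⟩ ⟨y⟩
        show φ (LieSubmodule.Quotient.mk' (fixedIdealOf hbr (idealOf η)) ⁅x, y⁆) = _
        rw [hφmk]
        show LieSubmodule.Quotient.mk' (gTLie k A g (idealOf η)) ⁅(x : A ⊗[k] g), (y : A ⊗[k] g)⁆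
          = _
        rfl }
  have hΦbij : Function.Bijective Φ := by
    constructor
    · rw [show (Φ : _ → Q) = (φ : _ → Q) from rfl]
      rw [← LinearMap.ker_eq_bot]
      rw [Submodule.ker_liftQ_eq_bot _ _ _ (le_of_eq hker)]
    · intro q
      obtain ⟨y, hy⟩ := hsurj q
      exact ⟨LieSubmodule.Quotient.mk' (fixedIdealOf hbr (idealOf η)) y, by rw [← hy]; rfl⟩
  exact ⟨LieEquiv.ofBijective Φ hΦbij, fun y => hφmk y⟩

end
end
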